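/- Let G be a connected finite simple graph with n vertices, n ≥ 3 and n ≡ 2 (mod 3), and suppose G has a cut vertex (i.e., κ(G) = 1). Then κ(G; K_{1,2}) = 1, that is, G has a K_{1,2}-structure-cut consisting of a single copy of K_{1,2}. -/

import Mathlib

/-- A copy of `K_{1,2}` in `G`: three distinct vertices `a, b, c` with `b`
adjacent to both `a` and `c`. -/
def SimpleGraph.IsK12Copy {V : Type*} [DecidableEq V] (G : SimpleGraph V)
    (s : Finset V) : Prop :=
  ∃ a b c : V, a ≠ b ∧ a ≠ c ∧ b ≠ c ∧ s = {a, b, c} ∧ G.Adj b a ∧ G.Adj b c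

/-- A `K_{1,2}`-structure-cut of `G`: a nonempty collection of pairwise
vertex-disjoint copies of `K_{1,2}` whose removal leaves a graph that is
disconnected or has exactly one vertex. -/
def SimpleGraph.IsK12StructureCut {V : Type*} [DecidableEq V] (G : SimpleGraph V)
    (F : Finset (Finset V)) : Prop :=
  F.Nonempty ∧ (∀ s ∈ F, G.IsK12Copy s) ∧
    (F : Set (Finset V)).Pairwise Disjoint ∧
    (¬ (G.induce {v : V | ∀ s ∈ F, v ∉ s}).Preconnected ∨
      {v : V | ∀ s ∈ F, v ∉ s}.ncard = 1)

/-- The connectivity of `G`: the minimum size of a vertex set whose deletion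
leaves a graph that is disconnected or has at most one vertex. -/
noncomputable def SimpleGraph.kappa {V : Type*} [Fintype V] [DecidableEq V]
    (G : SimpleGraph V) : ℕ :=
  sInf {k : ℕ | ∃ S : Finset V,
    (¬ (G.induce (↑S : Set V)ᶜ).Preconnected ∨ ((↑S : Set V)ᶜ).ncard ≤ 1) ∧
    S.card = k}

/-- The `K_{1,2}`-structure-connectivity of `G`: the minimum cardinality of a
`K_{1,2}`-structure-cut of `G`. -/
noncomputable def SimpleGraph.kappaK12 {V : Type*} [Fintype V] [DecidableEq V]
    (G : SimpleGraph V) : ℕ :=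
  sInf {k : ℕ | ∃ F : Finset (Finset V), G.IsK12StructureCut F ∧ F.card = k}

section Aux

variable {V : Type*}

/-- The graph `G` with the vertex `v` punctured: only edges avoiding `v`. -/
def punct (G : SimpleGraph V) (v : V) : SimpleGraph V where
  Adj p q := G.Adj p q ∧ p ≠ v ∧ q ≠ v
  symm := ⟨fun p q ⟨h, hp, hq⟩ => ⟨h.symm, hq, hp⟩⟩
  loopless := ⟨fun p ⟨h, _, _⟩ => h.ne rfl⟩

lemma cross_lemma {G : SimpleGraph V} (W : Set V) :
    ∀ {p q : V}, G.Walk p q → p ∈ W → q ∉ W →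
      ∃ r t, r ∈ W ∧ t ∉ W ∧ G.Adj r t := by
  intro p q w
  induction w with
  | nil => intro hp hq; exact absurd hp hq
  | @cons a b c h w ih =>
    intro hp hq
    by_cases hb : b ∈ W
    · exact ih hb hq
    · exact ⟨a, b, hp, hb, h⟩

lemma walk_stay {G : SimpleGraph V} {S W : Set V}
    (hcl : ∀ p q, p ∈ W → q ∈ S → G.Adj p q → q ∈ W) :
    ∀ {a b : ↥S}, (G.induce S).Walk a b → ↑a ∈ W → ↑b ∈ W := by
  intro a b w
  induction w with
  | nil => exact id
  | @cons a b c h w ih =>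
    intro ha
    exact ih (hcl a b ha b.2 h)

lemma cut_lemma {G : SimpleGraph V} {S W : Set V} {x y : V} (hxS : x ∈ S) (hyS : y ∈ S)
    (hxW : x ∈ W) (hyW : y ∉ W)
    (hcl : ∀ p q, p ∈ W → q ∈ S → G.Adj p q → q ∈ W) :
    ¬ (G.induce S).Preconnected := by
  intro h
  obtain ⟨w⟩ := h ⟨x, hxS⟩ ⟨y, hyS⟩
  exact hyW (walk_stay hcl w hxW)

lemma punct_reachable {G : SimpleGraph V} {v : V} :
    ∀ {a b : V}, (punct G v).Walk a b →
      ∀ (ha : a ≠ v) (hb : b ≠ v),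
        (G.induce {u : V | u ≠ v}).Reachable ⟨a, ha⟩ ⟨b, hb⟩ := by
  intro a b w
  induction w with
  | nil => intro ha hb; exact SimpleGraph.Reachable.refl _
  | @cons a b c h w ih =>
    intro ha hc
    have hb : b ≠ v := h.2.2
    have hadj : (G.induce {u : V | u ≠ v}).Adj ⟨a, ha⟩ ⟨b, hb⟩ := h.1
    exact hadj.reachable.trans (ih hb hc)

lemma first_step {G : SimpleGraph V} {a b : V} (h : G.Reachable a b) (hab : a ≠ b) :
    ∃ u, G.Adj a u := by
  obtain ⟨w⟩ := h
  cases w with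
  | nil => exact absurd rfl hab
  | cons h _ => exact ⟨_, h⟩

end Aux

section Main

/-- Packaging: a single `K_{1,2}` copy whose removal disconnects gives a
structure cut of size one. -/
lemma single_cut {V : Type*} [Fintype V] [DecidableEq V] (G : SimpleGraph V) {a b c : V} (hab : a ≠ b) (hac : a ≠ c) (hbc : b ≠ c)
    (h1 : G.Adj b a) (h2 : G.Adj b c)
    (hdis : ¬ (G.induce {u : V | u ≠ a ∧ u ≠ b ∧ u ≠ c}).Preconnected) :
    G.IsK12StructureCut {({a, b, c} : Finset V)} ∧
      ({({a, b, c} : Finset V)} : Finset (Finset V)).card = 1 := by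
  have hset : {u : V | ∀ s ∈ ({({a, b, c} : Finset V)} : Finset (Finset V)), u ∉ s}
      = {u : V | u ≠ a ∧ u ≠ b ∧ u ≠ c} := by
    ext u
    simp [not_or]
  refine ⟨⟨⟨{a, b, c}, Finset.mem_singleton_self _⟩, ?_, ?_, ?_⟩, Finset.card_singleton _⟩
  · intro s hs
    rw [Finset.mem_singleton] at hs
    exact ⟨a, b, c, hab, hac, hbc, hs, h1, h2⟩
  · simp
  · left
    rw [hset]
    exact hdis

lemma exists_notin4 {V : Type*} [Fintype V] [DecidableEq V]
    (h5 : 5 ≤ Fintype.card V) (a b c d : V) :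
    ∃ w : V, w ≠ a ∧ w ≠ b ∧ w ≠ c ∧ w ≠ d := by
  have hcard : ({a, b, c, d} : Finset V).card ≤ 4 := by
    apply le_trans (Finset.card_insert_le _ _)
    have h2 : ({b, c, d} : Finset V).card ≤ 3 := by
      apply le_trans (Finset.card_insert_le _ _)
      have h3 : ({c, d} : Finset V).card ≤ 2 := by
        apply le_trans (Finset.card_insert_le _ _)
        simp
      omega
    omega
  have hlt : ({a, b, c, d} : Finset V).card < Fintype.card V := by omega
  have hcompl : 0 < ({a, b, c, d} : Finset V)ᶜ.card := by
    rw [Finset.card_compl]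
    omega
  obtain ⟨w, hw⟩ := Finset.card_pos.mp hcompl
  rw [Finset.mem_compl] at hw
  simp only [Finset.mem_insert, Finset.mem_singleton, not_or] at hw
  exact ⟨w, hw.1, hw.2.1, hw.2.2.1, hw.2.2.2⟩

theorem cut_vertex_kappaK12_eq_one {V : Type*} [Fintype V] [DecidableEq V]
    (G : SimpleGraph V) (hconn : G.Connected) (hn : 3 ≤ Fintype.card V)
    (hmod : Fintype.card V % 3 = 2) (v : V)
    (hv : ¬ (G.induce {u : V | u ≠ v}).Preconnected) :
    G.kappaK12 = 1 ∧ ∃ F : Finset (Finset V), G.IsK12StructureCut F ∧ F.card = 1 := by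
  classical
  have h5 : 5 ≤ Fintype.card V := by omega
  suffices h : ∃ a b c : V, a ≠ b ∧ a ≠ c ∧ b ≠ c ∧ G.Adj b a ∧ G.Adj b c ∧
      ¬ (G.induce {u : V | u ≠ a ∧ u ≠ b ∧ u ≠ c}).Preconnected by
    obtain ⟨a, b, c, hab, hac, hbc, h1, h2, hdis⟩ := h
    obtain ⟨hcut, hcard⟩ := single_cut G hab hac hbc h1 h2 hdis
    refine ⟨?_, _, hcut, hcard⟩
    have hmem : 1 ∈ {k : ℕ | ∃ F : Finset (Finset V), G.IsK12StructureCut F ∧ F.card = k} :=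
      ⟨_, hcut, hcard⟩
    have hle : G.kappaK12 ≤ 1 := Nat.sInf_le hmem
    have hne : G.kappaK12 ≠ 0 := by
      intro h0
      have hmem0 : 0 ∈ {k : ℕ | ∃ F : Finset (Finset V), G.IsK12StructureCut F ∧ F.card = k} := by
        rw [← h0]
        exact Nat.sInf_mem ⟨1, hmem⟩
      obtain ⟨F, hF, hF0⟩ := hmem0
      rw [Finset.card_eq_zero] at hF0
      obtain ⟨t, ht⟩ := hF.1
      rw [hF0] at ht
      exact absurd ht (Finset.notMem_empty t)
    omega
  -- extract a non-reachable pair in G - v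
  simp only [SimpleGraph.Preconnected, not_forall] at hv
  obtain ⟨⟨x, hx⟩, ⟨y, hy⟩, hxy⟩ := hv
  replace hx : x ≠ v := hx
  replace hy : y ≠ v := hy
  have hxyP : ¬ (punct G v).Reachable x y := by
    intro hr
    obtain ⟨w⟩ := hr
    exact hxy (punct_reachable w hx hy)
  set A : Set V := {u : V | u ≠ v ∧ (punct G v).Reachable x u} with hAdef
  set B : Set V := {u : V | u ≠ v ∧ ¬ (punct G v).Reachable x u} with hBdef
  have hxA : x ∈ A := ⟨hx, SimpleGraph.Reachable.refl x⟩
  have hyB : y ∈ B := ⟨hy, hxyP⟩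
  have hvA : v ∉ A := fun h => h.1 rfl
  have hvB : v ∉ B := fun h => h.1 rfl
  have htri : ∀ u : V, u = v ∨ u ∈ A ∨ u ∈ B := by
    intro u
    by_cases huv : u = v
    · exact Or.inl huv
    · by_cases hru : (punct G v).Reachable x u
      · exact Or.inr (Or.inl ⟨huv, hru⟩)
      · exact Or.inr (Or.inr ⟨huv, hru⟩)
  have hABdis : ∀ u : V, u ∈ A → u ∈ B → False := fun u hA hB => hB.2 hA.2
  have hclA : ∀ p q : V, p ∈ A → q ≠ v → G.Adj p q → q ∈ A := by
    intro p q hp hq hadj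
    exact ⟨hq, hp.2.trans (SimpleGraph.Adj.reachable ⟨hadj, hp.1, hq⟩)⟩
  have hclB : ∀ p q : V, p ∈ B → q ≠ v → G.Adj p q → q ∈ B := by
    intro p q hp hq hadj
    refine ⟨hq, fun hrq => hp.2 ?_⟩
    exact hrq.trans (SimpleGraph.Adj.reachable ⟨hadj.symm, hq, hp.1⟩)
  -- v has a neighbour in A
  have hfindnbr : ∀ (W : Set V), (∀ p q : V, p ∈ W → q ≠ v → G.Adj p q → q ∈ W) →
      v ∉ W → ∀ z ∈ W, ∃ r ∈ W, G.Adj r v := by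
    intro W hcl hvW z hz
    obtain ⟨w⟩ := hconn.preconnected z v
    obtain ⟨r, t, hr, ht, hadj⟩ := cross_lemma W w hz hvW
    have htv : t = v := by
      by_contra htv
      exact ht (hcl r t hr htv hadj)
    exact ⟨r, hr, htv ▸ hadj⟩
  obtain ⟨nA, hnA, hnAv⟩ := hfindnbr A hclA hvA x hxA
  obtain ⟨nB, hnB, hnBv⟩ := hfindnbr B hclB hvB y hyB
  have hnAnB : nA ≠ nB := fun h => hABdis nA hnA (h ▸ hnB)
  by_cases hA2 : ∃ d ∈ A, d ≠ nA
  · -- |A| ≥ 2 : nA has a neighbour u0 inside A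
    obtain ⟨d0, hd0A, hd0⟩ := hA2
    have hreach : (punct G v).Reachable nA d0 := hnA.2.symm.trans hd0A.2
    obtain ⟨u0, hu0adj⟩ := first_step hreach (Ne.symm hd0)
    have hu0v : u0 ≠ v := hu0adj.2.2
    have hu0G : G.Adj nA u0 := hu0adj.1
    have hu0A : u0 ∈ A := hclA nA u0 hnA hu0v hu0G
    have hnAu0 : nA ≠ u0 := hu0G.ne
    by_cases hA3 : ∃ e ∈ A, e ≠ nA ∧ e ≠ u0
    · -- Case I : remove {v, nA, u0}
      obtain ⟨e, heA, henA, heu0⟩ := hA3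
      refine ⟨v, nA, u0, Ne.symm hnA.1, Ne.symm hu0A.1, hnAu0, hnAv, hu0G, ?_⟩
      refine cut_lemma (W := A) (x := e) (y := y)
        ⟨heA.1, henA, heu0⟩
        ⟨hy, fun h => hABdis nA hnA (h ▸ hyB), fun h => hABdis u0 hu0A (h ▸ hyB)⟩
        heA (fun h => hABdis y h hyB) ?_
      intro p q hp hq hadj
      exact hclA p q hp hq.1 hadj
    · -- A = {nA, u0}
      by_cases hBc : ∃ c0 ∈ B, G.Adj v c0 ∧ ∃ d1 ∈ B, G.Adj c0 d1
      · obtain ⟨c0, hc0B, hvc0, d1, hd1B, hc0d1⟩ := hBc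
        by_cases hB3 : ∃ e ∈ B, e ≠ c0 ∧ e ≠ d1
        · -- Case II : remove {v, c0, d1}
          obtain ⟨e, heB, hec0, hed1⟩ := hB3
          refine ⟨v, c0, d1, Ne.symm hc0B.1, Ne.symm hd1B.1, hc0d1.ne, hvc0.symm, hc0d1, ?_⟩
          refine cut_lemma (W := B) (x := e) (y := x)
            ⟨heB.1, hec0, hed1⟩
            ⟨hx, fun h => hABdis c0 (h ▸ hxA) hc0B, fun h => hABdis d1 (h ▸ hxA) hd1B⟩
            heB (fun h => hABdis x hxA h) ?_
          intro p q hp hq hadj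
          exact hclB p q hp hq.1 hadj
        · -- B = {c0, d1} : Case III : remove {nA, v, nB}
          have hc0d1ne : c0 ≠ d1 := hc0d1.ne
          obtain ⟨e, heB, henB⟩ : ∃ e ∈ B, e ≠ nB := by
            by_cases hc0nB : c0 = nB
            · exact ⟨d1, hd1B, fun h => hc0d1ne (hc0nB.trans h.symm)⟩
            · exact ⟨c0, hc0B, hc0nB⟩
          refine ⟨nA, v, nB, hnA.1, hnAnB, Ne.symm hnB.1, hnAv.symm, hnBv.symm, ?_⟩
          refine cut_lemma (W := A) (x := u0) (y := e)
            ⟨Ne.symm hnAu0, hu0A.1, fun h => hABdis u0 hu0A (by rw [h]; exact hnB)⟩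
            ⟨fun h => hABdis nA hnA (by rw [← h]; exact heB), heB.1, henB⟩
            hu0A (fun h => hABdis e h heB) ?_
          intro p q hp hq hadj
          exact hclA p q hp hq.2.1 hadj
      · -- no such pair : nB is isolated apart from v ; remove {v, nA, u0}
        push_neg at hBc
        have hnBiso : ∀ q : V, q ≠ v → G.Adj nB q → False := by
          intro q hqv hadj
          rcases htri q with h | h | h
          · exact hqv h
          · exact hABdis nB (hclA q nB h hnB.1 hadj.symm) hnB
          · exact hBc nB hnB hnBv.symm q h hadj
        have hnBu0 : nB ≠ u0 := fun h => hABdis u0 hu0A (by rw [← h]; exact hnB)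
        obtain ⟨w0, hw0v, hw0nA, hw0u0, hw0nB⟩ := exists_notin4 h5 v nA u0 nB
        refine ⟨v, nA, u0, Ne.symm hnA.1, Ne.symm hu0A.1, hnAu0, hnAv, hu0G, ?_⟩
        refine cut_lemma (W := ({nB} : Set V)) (x := nB) (y := w0)
          ⟨hnB.1, Ne.symm hnAnB, hnBu0⟩
          ⟨hw0v, hw0nA, hw0u0⟩
          rfl (fun h => hw0nB h) ?_
        intro p q hp hq hadj
        rw [Set.mem_singleton_iff] at hp
        subst hp
        exact absurd hadj (fun hadj => hnBiso q hq.1 hadj)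
  · -- A = {nA}
    push_neg at hA2
    by_cases hBd : ∃ d ∈ B, G.Adj nB d
    · -- remove {v, nB, d1}
      obtain ⟨d1, hd1B, hnBd1⟩ := hBd
      obtain ⟨e, hev, henA, henB, hed1⟩ := exists_notin4 h5 v nA nB d1
      have heB : e ∈ B := by
        rcases htri e with h | h | h
        · exact absurd h hev
        · exact absurd (hA2 e h) henA
        · exact h
      refine ⟨v, nB, d1, Ne.symm hnB.1, Ne.symm hd1B.1, hnBd1.ne, hnBv, hnBd1, ?_⟩
      refine cut_lemma (W := B) (x := e) (y := nA)
        ⟨hev, henB, hed1⟩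
        ⟨hnA.1, hnAnB, fun h => hABdis nA hnA (by rw [h]; exact hd1B)⟩
        heB (fun h => hABdis nA hnA h) ?_
      intro p q hp hq hadj
      exact hclB p q hp hq.1 hadj
    · -- nB is isolated apart from v
      push_neg at hBd
      have hnBiso : ∀ q : V, q ≠ v → G.Adj nB q → False := by
        intro q hqv hadj
        rcases htri q with h | h | h
        · exact hqv h
        · exact hABdis nB (hclA q nB h hnB.1 hadj.symm) hnB
        · exact hBd q h hadj
      -- find a second neighbour of v in B, distinct from nB
      obtain ⟨u1, hu1v, hu1nA, hu1nB, _⟩ := exists_notin4 h5 v nA nB nB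
      have hu1B : u1 ∈ B := by
        rcases htri u1 with h | h | h
        · exact absurd h hu1v
        · exact absurd (hA2 u1 h) hu1nA
        · exact h
      set W1 : Set V := {p : V | p ≠ v ∧ (punct G v).Reachable u1 p} with hW1def
      have hclW1 : ∀ p q : V, p ∈ W1 → q ≠ v → G.Adj p q → q ∈ W1 := by
        intro p q hp hq hadj
        exact ⟨hq, hp.2.trans (SimpleGraph.Adj.reachable ⟨hadj, hp.1, hq⟩)⟩
      obtain ⟨r, hrW1, hrv⟩ := hfindnbr W1 hclW1 (fun h => h.1 rfl) u1
        ⟨hu1v, SimpleGraph.Reachable.refl u1⟩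
      have hrB : r ∈ B := by
        refine ⟨hrW1.1, fun hxr => hu1B.2 ?_⟩
        exact hxr.trans hrW1.2.symm
      have hrnB : r ≠ nB := by
        intro h
        subst h
        obtain ⟨q, hq⟩ := first_step hrW1.2.symm (Ne.symm hu1nB)
        exact hnBiso q hq.2.2 hq.1
      have hnAr : nA ≠ r := fun h => hABdis nA hnA (by rw [h]; exact hrB)
      obtain ⟨w0, hw0nA, hw0v, hw0r, hw0nB⟩ := exists_notin4 h5 nA v r nB
      refine ⟨nA, v, r, hnA.1, hnAr, Ne.symm hrW1.1, hnAv.symm, hrv.symm, ?_⟩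
      refine cut_lemma (W := ({nB} : Set V)) (x := nB) (y := w0)
        ⟨Ne.symm hnAnB, hnB.1, Ne.symm hrnB⟩
        ⟨hw0nA, hw0v, hw0r⟩
        rfl (fun h => hw0nB h) ?_
      intro p q hp hq hadj
      rw [Set.mem_singleton_iff] at hp
      subst hp
      exact absurd hadj (fun hadj => hnBiso q hq.2.1 hadj)

end Main
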